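/- Let 𝔾 = ∏_{p prime} ℤ/p²ℤ be the compact abelian group with the product topology, let ℙ be its Haar probability measure, and let u ∈ 𝔾 be the element all of whose coordinates equal 1. A complex number λ is an eigenvalue of the Koopman operator of the translation T_u(g) = g + u on L²(𝔾, ℙ) — i.e., there exists a measurable f : 𝔾 → ℂ with ∫ |f|² dℙ < ∞, f not ℙ-almost everywhere zero, and f(g + u) = λ·f(g) for ℙ-almost every g — if and only if λ = e(l/d²) for some square-free positive integer d and some integer l with 0 ≤ l ≤ d²−1 and gcd(l, d²) square-free (with the convention gcd(0, d²) = d²). -/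

import Mathlib

open MeasureTheory

/-- Each finite coordinate group `ℤ/nℤ` carries the discrete (⊤) σ-algebra. -/
instance (n : ℕ) : MeasurableSpace (ZMod n) := ⊤

/-- The compact abelian group `𝔾 = ∏_{p prime} ℤ/p²ℤ`, with the product σ-algebra
(which is the Borel σ-algebra of the product topology). -/
abbrev SqFreeGroup : Type := ∀ p : {p : ℕ // p.Prime}, ZMod ((p : ℕ) ^ 2)

namespace KoopmanAux

open Filter Complex

noncomputable section

abbrev PP := {p : ℕ // p.Prime}

instance : Infinite PP := Nat.Primes.infinite

instance : Denumerable PP := Denumerable.ofEncodableOfInfinite _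

def pe : ℕ ≃ PP := (Denumerable.eqv PP).symm

def uu : SqFreeGroup := fun _ => 1

instance (n : ℕ) : MeasurableSingletonClass (ZMod n) := ⟨fun _ => trivial⟩

instance (p : PP) : NeZero ((p : ℕ) ^ 2) := ⟨pow_ne_zero _ p.2.pos.ne'⟩

lemma measurable_coordwise (F : ∀ i : PP, ZMod ((i : ℕ) ^ 2) → ZMod ((i : ℕ) ^ 2)) :
    Measurable (fun x : SqFreeGroup => fun i => F i (x i)) :=
  measurable_pi_lambda _ fun i =>
    (measurable_from_top (f := F i)).comp (measurable_pi_apply i)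

lemma measurable_addConst (v : SqFreeGroup) : Measurable (fun x : SqFreeGroup => x + v) :=
  measurable_coordwise (fun i z => z + v i)

lemma measurable_subConst (v : SqFreeGroup) : Measurable (fun x : SqFreeGroup => x - v) :=
  measurable_coordwise (fun i z => z - v i)

/-- Translation as a measurable equivalence. -/
def Te (v : SqFreeGroup) : SqFreeGroup ≃ᵐ SqFreeGroup where
  toEquiv := ⟨fun x => x + v, fun x => x - v, fun x => by simp, fun x => by simp⟩
  measurable_toFun := measurable_addConst v
  measurable_invFun := measurable_subConst v

def coordSA (i : PP) : MeasurableSpace SqFreeGroup :=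
  MeasurableSpace.comap (fun x : SqFreeGroup => x i) ⊤

lemma coordSA_le (i : PP) : coordSA i ≤ (inferInstance : MeasurableSpace SqFreeGroup) :=
  (measurable_pi_apply i).comap_le

def filt : Filtration ℕ (inferInstance : MeasurableSpace SqFreeGroup) where
  seq n := ⨆ i ∈ Finset.range n, coordSA (pe i)
  mono' := fun a b hab => biSup_mono fun i hi =>
    Finset.mem_range.mpr (lt_of_lt_of_le (Finset.mem_range.mp hi) hab)
  le' n := iSup₂_le fun i _ => coordSA_le (pe i)

lemma filt_eq (n : ℕ) : (filt n : MeasurableSpace SqFreeGroup)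
    = ⨆ i ∈ Finset.range n, coordSA (pe i) := rfl

lemma iSup_filt : (⨆ n, (filt n : MeasurableSpace SqFreeGroup))
    = (inferInstance : MeasurableSpace SqFreeGroup) := by
  refine le_antisymm (iSup_le fun n => filt.le n) ?_
  have hpi : (inferInstance : MeasurableSpace SqFreeGroup) = ⨆ i : PP, coordSA i := rfl
  refine le_trans hpi.le (iSup_le fun i => ?_)
  have h1 : coordSA i ≤ filt ((pe.symm i) + 1) := by
    rw [filt_eq]
    have := le_iSup₂ (f := fun (j : ℕ) (_ : j ∈ Finset.range (pe.symm i + 1)) =>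
      coordSA (pe j)) (pe.symm i) (Finset.mem_range.mpr (Nat.lt_succ_self _))
    rwa [Equiv.apply_symm_apply] at this
  exact h1.trans (le_iSup _ _)

lemma comap_addConst_top {m : ℕ} (c : ZMod m) :
    MeasurableSpace.comap (fun z : ZMod m => z + c) ⊤ = ⊤ := by
  refine le_antisymm le_top ?_
  intro s _
  exact ⟨(fun z => z - c) ⁻¹' s, trivial, by ext z; simp⟩

lemma comap_translate (v : SqFreeGroup) (n : ℕ) :
    MeasurableSpace.comap (fun x : SqFreeGroup => x + v) (filt n) = filt n := by
  rw [filt_eq]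
  rw [MeasurableSpace.comap_iSup]
  refine iSup_congr fun i => ?_
  rw [MeasurableSpace.comap_iSup]
  refine iSup_congr fun hi => ?_
  show MeasurableSpace.comap _ (MeasurableSpace.comap _ ⊤) = _
  rw [MeasurableSpace.comap_comp]
  have h1 : ((fun x : SqFreeGroup => x (pe i)) ∘ fun x => x + v)
      = (fun z => z + v (pe i)) ∘ (fun x : SqFreeGroup => x (pe i)) := rfl
  rw [h1, ← MeasurableSpace.comap_comp, comap_addConst_top]
  rfl

lemma measurable_translate_filt (v : SqFreeGroup) (n : ℕ) :
    Measurable[filt n, filt n] (fun x : SqFreeGroup => x + v) := by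
  rw [measurable_iff_comap_le]
  exact (comap_translate v n).le

def pairSA (x y : SqFreeGroup) : MeasurableSpace SqFreeGroup where
  MeasurableSet' s := (x ∈ s ↔ y ∈ s)
  measurableSet_empty := Iff.rfl
  measurableSet_compl s hs := not_congr hs
  measurableSet_iUnion f hf := by
    simp only [Set.mem_iUnion]
    exact exists_congr hf

lemma filt_invariant {n : ℕ} {h : SqFreeGroup → ℂ}
    (hh : StronglyMeasurable[filt n] h) {x y : SqFreeGroup}
    (hxy : ∀ i ∈ Finset.range n, x (pe i) = y (pe i)) : h x = h y := by
  have hle : (filt n : MeasurableSpace SqFreeGroup) ≤ pairSA x y := by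
    rw [filt_eq]
    refine iSup₂_le fun i hi => ?_
    rintro s ⟨t, -, rfl⟩
    show x (pe i) ∈ t ↔ y (pe i) ∈ t
    rw [hxy i hi]
  have hs : MeasurableSet[filt n] (h ⁻¹' {h x}) := hh.measurable (measurableSet_singleton _)
  exact ((hle _ hs).mp rfl).symm

section CondExp

variable (P : Measure SqFreeGroup) [IsProbabilityMeasure P]

lemma condexp_comp_add
    (hinv : ∀ h : SqFreeGroup, MeasurePreserving (fun g => g + h) P P)
    {f : SqFreeGroup → ℂ} (hf : Integrable f P) (n : ℕ) (v : SqFreeGroup) :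
    (fun x => (P[f|filt n]) (x + v)) =ᵐ[P] P[(fun x => f (x + v))|filt n] := by
  have hm := filt.le n
  have hfv : Integrable (fun x => f (x + v)) P :=
    ((hinv v).integrable_comp hf.aestronglyMeasurable).mpr hf
  have hgint : Integrable (fun x => (P[f|filt n]) (x + v)) P :=
    ((hinv v).integrable_comp (integrable_condExp (m := filt n)).aestronglyMeasurable).mpr
      integrable_condExp
  refine ae_eq_condExp_of_forall_setIntegral_eq hm hfv
    (fun s _ _ => hgint.integrableOn) (fun s hs _ => ?_) ?_
  · set t : Set SqFreeGroup := (fun x => x + (-v)) ⁻¹' s with ht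
    have htm : MeasurableSet[filt n] t := measurable_translate_filt (-v) n hs
    have hts : (fun x : SqFreeGroup => x + v) ⁻¹' t = s := by
      ext z; simp [ht]
    calc ∫ x in s, (P[f|filt n]) (x + v) ∂P
        = ∫ x in (fun x : SqFreeGroup => x + v) ⁻¹' t, (P[f|filt n]) (x + v) ∂P := by rw [hts]
      _ = ∫ y in t, (P[f|filt n]) y ∂P :=
          (hinv v).setIntegral_preimage_emb (Te v).measurableEmbedding _ t
      _ = ∫ y in t, f y ∂P := setIntegral_condExp hm hf htm
      _ = ∫ x in (fun x : SqFreeGroup => x + v) ⁻¹' t, f (x + v) ∂P :=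
          ((hinv v).setIntegral_preimage_emb (Te v).measurableEmbedding f t).symm
      _ = ∫ x in s, f (x + v) ∂P := by rw [hts]
  · exact ((stronglyMeasurable_condExp (m := filt n)).comp_measurable
      (measurable_translate_filt v n)).aestronglyMeasurable

lemma condexp_clm (L : ℂ →L[ℝ] ℝ)
    {f : SqFreeGroup → ℂ} (hf : Integrable f P) (n : ℕ) :
    (fun x => L ((P[f|filt n]) x)) =ᵐ[P] P[(fun x => L (f x))|filt n] := by
  have hm := filt.le n
  refine ae_eq_condExp_of_forall_setIntegral_eq hm (L.integrable_comp hf)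
    (fun s _ _ => (L.integrable_comp (integrable_condExp (m := filt n))).integrableOn)
    (fun s hs _ => ?_)
    ((L.continuous.comp_stronglyMeasurable
      (stronglyMeasurable_condExp (m := filt n))).aestronglyMeasurable)
  rw [L.integral_comp_comm (integrable_condExp (m := filt n)).integrableOn,
    setIntegral_condExp hm hf hs, ← L.integral_comp_comm hf.integrableOn]

lemma exists_condexp_ne {f : SqFreeGroup → ℂ} (hmeas : Measurable f)
    (hf : Integrable f P) (hne : ¬ f =ᵐ[P] 0) :
    ∃ n, ¬ ((P[f|filt n]) =ᵐ[P] 0) := by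
  by_contra hcon
  push_neg at hcon
  apply hne
  have key : ∀ (L : ℂ →L[ℝ] ℝ), (fun x => L (f x)) =ᵐ[P] 0 := by
    intro L
    have hLint : Integrable (fun x => L (f x)) P := L.integrable_comp hf
    have hLmeas : StronglyMeasurable[⨆ n, (filt n : MeasurableSpace SqFreeGroup)]
        (fun x => L (f x)) := by
      rw [iSup_filt]
      exact (Measurable.stronglyMeasurable (L.continuous.measurable.comp hmeas))
    have hTend := hLint.tendsto_eLpNorm_condExp (ℱ := filt) hLmeas
    have hzero : ∀ n, (P[(fun x => L (f x))|filt n]) =ᵐ[P] 0 := by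
      intro n
      refine (condexp_clm P L hf n).symm.trans ?_
      filter_upwards [hcon n] with x hx
      simp [hx]
    have hconst : (fun n => eLpNorm ((P[(fun x => L (f x))|filt n]) - (fun x => L (f x))) 1 P)
        = fun _ => eLpNorm (fun x => L (f x)) 1 P := by
      funext n
      have : ((P[(fun x => L (f x))|filt n]) - (fun x => L (f x)))
          =ᵐ[P] -(fun x => L (f x)) := by
        filter_upwards [hzero n] with x hx
        simp [hx]
      rw [eLpNorm_congr_ae this, eLpNorm_neg]
    rw [hconst] at hTend
    have h0 : eLpNorm (fun x => L (f x)) 1 P = 0 :=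
      tendsto_nhds_unique tendsto_const_nhds hTend
    exact (eLpNorm_eq_zero_iff hLint.aestronglyMeasurable one_ne_zero).mp h0
  filter_upwards [key Complex.reCLM, key Complex.imCLM] with x h1 h2
  have h1' : (f x).re = 0 := h1
  have h2' : (f x).im = 0 := h2
  show f x = 0
  exact Complex.ext (by simpa using h1') (by simpa using h2')

end CondExp

section NumberTheory

lemma squarefree_prod_primes {s : Finset ℕ} (hs : ∀ p ∈ s, p.Prime) :
    Squarefree (∏ p ∈ s, p) := by
  classical
  induction s using Finset.induction_on with
  | empty => simpa using squarefree_one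
  | insert a s hmem ih =>
    rw [Finset.prod_insert hmem]
    have ha := hs a (Finset.mem_insert_self _ _)
    have hs' : ∀ p ∈ s, p.Prime := fun p hp => hs p (Finset.mem_insert_of_mem hp)
    have hcop : Nat.Coprime a (∏ p ∈ s, p) :=
      Nat.Coprime.prod_right fun q hq =>
        (Nat.coprime_primes ha (hs' q hq)).mpr (by rintro rfl; exact hmem hq)
    exact (Nat.squarefree_mul hcop).mpr ⟨ha.squarefree, ih hs'⟩

lemma exists_rep (lam : ℂ) (d : ℕ) (hd : Squarefree d) (h : lam ^ (d ^ 2) = 1) :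
    ∃ d' l : ℕ, Squarefree d' ∧ l < d' ^ 2 ∧ Squarefree (Nat.gcd l (d' ^ 2)) ∧
      lam = Complex.exp (2 * Real.pi * Complex.I * ((l : ℂ) / (d' : ℂ) ^ 2)) := by
  have hd0 : d ≠ 0 := hd.ne_zero
  have hd2 : (d ^ 2 : ℕ) ≠ 0 := pow_ne_zero _ hd0
  haveI : NeZero (d ^ 2) := ⟨hd2⟩
  obtain ⟨k, hk, hkl⟩ := (Complex.isPrimitiveRoot_exp (d ^ 2) hd2).eq_pow_of_pow_eq_one h
  have hdC : ((d : ℂ)) ^ 2 ≠ 0 := pow_ne_zero _ (Nat.cast_ne_zero.mpr hd0)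
  have hlam : lam = Complex.exp (2 * Real.pi * Complex.I * ((k : ℂ) / (d : ℂ) ^ 2)) := by
    rw [← hkl, ← Complex.exp_nat_mul]
    congr 1
    have : ((d ^ 2 : ℕ) : ℂ) = (d : ℂ) ^ 2 := by push_cast; ring
    rw [this]
    field_simp
  rcases Nat.eq_zero_or_pos k with rfl | hkpos
  · refine ⟨1, 0, squarefree_one, by norm_num, by norm_num, ?_⟩
    rw [hlam]; norm_num
  set G := Nat.gcd k (d ^ 2) with hG
  have hGpos : 0 < G := Nat.gcd_pos_of_pos_left _ hkpos
  set a := k / G with ha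
  set b := d ^ 2 / G with hb
  have hka : G * a = k := Nat.mul_div_cancel' (Nat.gcd_dvd_left _ _)
  have hdb : G * b = d ^ 2 := Nat.mul_div_cancel' (Nat.gcd_dvd_right _ _)
  have hb0 : b ≠ 0 := by
    rintro h0
    rw [h0, mul_zero] at hdb
    exact hd2 hdb.symm
  have hab : Nat.Coprime a b := Nat.coprime_div_gcd_div_gcd hGpos
  set r := ∏ p ∈ b.primeFactors, p with hr
  have hrsq : Squarefree r := squarefree_prod_primes fun p hp => Nat.prime_of_mem_primeFactors hp
  have hr0 : r ≠ 0 := hrsq.ne_zero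
  have hr20 : r ^ 2 ≠ 0 := pow_ne_zero _ hr0
  have hrb : r ∣ b := Nat.prod_primeFactors_dvd b
  have hbd : b ∣ d ^ 2 := ⟨G, by rw [← hdb]; ring⟩
  have hbr2 : b ∣ r ^ 2 := by
    rw [← Nat.factorization_le_iff_dvd hb0 hr20, Finsupp.le_def]
    intro p
    by_cases hp : p ∈ b.primeFactors
    · have hple : b.factorization p ≤ 2 := by
        have h1 := (Nat.factorization_le_iff_dvd hb0 hd2).mpr hbd
        have h2 := Finsupp.le_def.mp h1 p
        have h3 : (d ^ 2).factorization p = 2 * d.factorization p := by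
          rw [Nat.factorization_pow]; simp [mul_comm]
        have h4 : d.factorization p ≤ 1 := hd.natFactorization_le_one p
        omega
      have hrp : r.factorization p = 1 :=
        Nat.factorization_eq_one_of_squarefree hrsq (Nat.prime_of_mem_primeFactors hp)
          (Finset.dvd_prod_of_mem _ hp)
      have : (r ^ 2).factorization p = 2 := by
        rw [Nat.factorization_pow]; simp [hrp, mul_comm]
      omega
    · have : b.factorization p = 0 := by
        rw [← Nat.support_factorization] at hp
        exact Finsupp.notMem_support_iff.mp hp
      simp [this]
  set c := r ^ 2 / b with hc
  have hcb : c * b = r ^ 2 := Nat.div_mul_cancel hbr2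
  have hcr : c ∣ r := by
    obtain ⟨e, he⟩ := hrb
    refine ⟨e, ?_⟩
    have h2 : r * (c * e) = r * r := by
      calc r * (c * e) = c * (r * e) := by ring
        _ = c * b := by rw [← he]
        _ = r ^ 2 := hcb
        _ = r * r := sq r
    exact (Nat.eq_of_mul_eq_mul_left (Nat.pos_of_ne_zero hr0) h2).symm
  have har : Nat.Coprime a (r ^ 2) :=
    (Nat.Coprime.coprime_dvd_right hrb hab).pow_right 2
  have hgcd : Nat.gcd (a * c) (r ^ 2) = Nat.gcd c (r ^ 2) :=
    Nat.Coprime.gcd_mul_left_cancel c har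
  have hsq : Squarefree (Nat.gcd (a * c) (r ^ 2)) := by
    rw [hgcd]
    exact hrsq.squarefree_of_dvd ((Nat.gcd_dvd_left _ _).trans hcr)
  refine ⟨r, (a * c) % r ^ 2, hrsq,
    Nat.mod_lt _ (Nat.pos_of_ne_zero hr20), ?_, ?_⟩
  · have : Nat.gcd ((a * c) % r ^ 2) (r ^ 2) = Nat.gcd (a * c) (r ^ 2) := by
      rw [← Nat.gcd_rec]
      exact Nat.gcd_comm _ _
    rw [this]
    exact hsq
  · rw [hlam]
    set q := (a * c) / (r ^ 2) with hq
    set l := (a * c) % (r ^ 2) with hl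
    have hql : r ^ 2 * q + l = a * c := Nat.div_add_mod _ _
    have hnat : k * r ^ 2 = (a * c) * d ^ 2 := by
      calc k * r ^ 2 = (G * a) * (c * b) := by rw [hka, hcb]
        _ = (a * c) * (G * b) := by ring
        _ = (a * c) * d ^ 2 := by rw [hdb]
    have hrC : ((r : ℂ)) ^ 2 ≠ 0 := pow_ne_zero _ (Nat.cast_ne_zero.mpr hr0)
    have hCnat : (k : ℂ) * (r : ℂ) ^ 2 = ((a : ℂ) * (c : ℂ)) * (d : ℂ) ^ 2 := by
      exact_mod_cast hnat
    have hCl : ((a : ℂ) * (c : ℂ)) = (r : ℂ) ^ 2 * (q : ℂ) + (l : ℂ) := by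
      exact_mod_cast hql.symm
    have hsplit : 2 * (Real.pi : ℂ) * Complex.I * ((k : ℂ) / (d : ℂ) ^ 2)
        = 2 * (Real.pi : ℂ) * Complex.I * ((l : ℂ) / (r : ℂ) ^ 2)
          + (q : ℤ) * (2 * (Real.pi : ℂ) * Complex.I) := by
      have hk' : (k : ℂ) / (d : ℂ) ^ 2 = ((l : ℂ) / (r : ℂ) ^ 2) + (q : ℂ) := by
        rw [div_add' _ _ _ hrC, div_eq_div_iff hdC hrC]
        calc (k : ℂ) * (r : ℂ) ^ 2 = ((a : ℂ) * (c : ℂ)) * (d : ℂ) ^ 2 := hCnat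
          _ = ((l : ℂ) + (q : ℂ) * (r : ℂ) ^ 2) * (d : ℂ) ^ 2 := by rw [hCl]; ring
      rw [hk']
      push_cast
      ring
    rw [hsplit, Complex.exp_add, Complex.exp_int_mul_two_pi_mul_I, mul_one]

lemma char_step {m : ℕ} (hm : m ≠ 0) (l : ℕ) (w : ZMod m) :
    Complex.exp (2 * Real.pi * Complex.I * ((l : ℂ) * (((w + 1 : ZMod m)).val : ℂ) / (m : ℂ))) =
      Complex.exp (2 * Real.pi * Complex.I * ((l : ℂ) / (m : ℂ))) *
      Complex.exp (2 * Real.pi * Complex.I * ((l : ℂ) * ((w.val : ℂ)) / (m : ℂ))) := by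
  haveI : NeZero m := ⟨hm⟩
  have hmC : (m : ℂ) ≠ 0 := Nat.cast_ne_zero.mpr hm
  have e1 : (((w + 1 : ZMod m)).val : ZMod m) = ((w.val + 1 : ℕ) : ZMod m) := by
    push_cast
    rw [ZMod.natCast_val, ZMod.natCast_val, ZMod.cast_id, ZMod.cast_id]
  have hmod : (w + 1 : ZMod m).val ≡ w.val + 1 [MOD m] :=
    (ZMod.natCast_eq_natCast_iff _ _ _).mp e1
  obtain ⟨z, hz⟩ := hmod.dvd
  have hZ : (((w + 1 : ZMod m)).val : ℤ) = (w.val : ℤ) + 1 - m * z := by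
    push_cast at hz
    omega
  have hC : (((w + 1 : ZMod m)).val : ℂ) = (w.val : ℂ) + 1 - (m : ℂ) * (z : ℂ) := by
    exact_mod_cast hZ
  have hA : 2 * (Real.pi : ℂ) * Complex.I * ((l : ℂ) * (((w + 1 : ZMod m)).val : ℂ) / (m : ℂ))
      = (2 * (Real.pi : ℂ) * Complex.I * ((l : ℂ) / (m : ℂ))
          + 2 * (Real.pi : ℂ) * Complex.I * ((l : ℂ) * ((w.val : ℂ)) / (m : ℂ)))
        + ((-(l * z) : ℤ) : ℂ) * (2 * (Real.pi : ℂ) * Complex.I) := by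
    rw [hC]
    push_cast
    field_simp
    ring
  rw [hA, Complex.exp_add, Complex.exp_add, Complex.exp_int_mul_two_pi_mul_I, mul_one]

end NumberTheory

section Backward

lemma backward_eigen (P : Measure SqFreeGroup) [IsProbabilityMeasure P]
    (d l : ℕ) (hd : Squarefree d) :
    ∃ f : SqFreeGroup → ℂ, Measurable f ∧
        Integrable (fun g => ‖f g‖ ^ 2) P ∧
        ¬ (f =ᵐ[P] 0) ∧
        ∀ᵐ g ∂P, f (g + fun _ => 1)
          = Complex.exp (2 * Real.pi * Complex.I * ((l : ℂ) / (d : ℂ) ^ 2)) * f g := by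
  classical
  have hd0 : d ≠ 0 := hd.ne_zero
  have hd2 : (d ^ 2 : ℕ) ≠ 0 := pow_ne_zero _ hd0
  haveI : NeZero (d ^ 2) := ⟨hd2⟩
  have hprime : ∀ i : d.primeFactors, Nat.Prime (i : ℕ) := fun i =>
    Nat.prime_of_mem_primeFactors i.2
  have hcop : Pairwise (Function.onFun Nat.Coprime (fun i : d.primeFactors => (i : ℕ) ^ 2)) :=
    fun i j hij =>
      Nat.Coprime.pow _ _ ((Nat.coprime_primes (hprime i) (hprime j)).mpr
        fun h => hij (Subtype.ext h))
  have hprodA : (∏ i : d.primeFactors, (i : ℕ) ^ 2) = d ^ 2 := by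
    rw [Finset.prod_coe_sort d.primeFactors (fun p => p ^ 2), Finset.prod_pow,
      Nat.prod_primeFactors_of_squarefree hd]
  let E := ZMod.prodEquivPi (fun i : d.primeFactors => (i : ℕ) ^ 2) hcop
  let C := ZMod.ringEquivCongr hprodA
  let proj : SqFreeGroup → ∀ i : d.primeFactors, ZMod ((i : ℕ) ^ 2) :=
    fun x i => x ⟨(i : ℕ), hprime i⟩
  let φ : SqFreeGroup → ZMod (d ^ 2) := fun x => C (E.symm (proj x))
  have hφadd : ∀ x y, φ (x + y) = φ x + φ y := by
    intro x y
    have hp : proj (x + y) = proj x + proj y := rfl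
    simp only [φ, hp, map_add]
  have hφu : φ uu = 1 := by
    have hp : proj uu = 1 := rfl
    simp only [φ, hp, map_one]
  have hnorm : ∀ x : SqFreeGroup, ‖Complex.exp (2 * Real.pi * Complex.I
      * ((l : ℂ) * ((φ x).val : ℂ) / ((d ^ 2 : ℕ) : ℂ)))‖ = 1 := by
    intro x
    have hA : 2 * (Real.pi : ℂ) * Complex.I * ((l : ℂ) * ((φ x).val : ℂ) / ((d ^ 2 : ℕ) : ℂ))
        = (((2 * Real.pi * (l * ((φ x).val : ℝ) / ((d ^ 2 : ℕ) : ℝ)) : ℝ)) : ℂ)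
          * Complex.I := by
      push_cast
      ring
    rw [hA, Complex.norm_exp_ofReal_mul_I]
  refine ⟨fun x => Complex.exp (2 * Real.pi * Complex.I
      * ((l : ℂ) * ((φ x).val : ℂ) / ((d ^ 2 : ℕ) : ℂ))), ?_, ?_, ?_, ?_⟩
  · -- measurability
    have hfin : ∀ i : d.primeFactors, Finite (ZMod ((i : ℕ) ^ 2)) := by
      intro i
      haveI : NeZero ((i : ℕ) ^ 2) := ⟨pow_ne_zero _ (hprime i).pos.ne'⟩
      infer_instance
    haveI := hfin
    have hproj : Measurable proj := measurable_pi_lambda _ fun i => measurable_pi_apply _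
    have hrest : Measurable (fun v : ∀ i : d.primeFactors, ZMod ((i : ℕ) ^ 2) =>
        Complex.exp (2 * Real.pi * Complex.I
          * ((l : ℂ) * (((C (E.symm v)).val : ℂ)) / ((d ^ 2 : ℕ) : ℂ)))) :=
      measurable_of_countable _
    exact hrest.comp hproj
  · have : (fun x : SqFreeGroup => ‖Complex.exp (2 * Real.pi * Complex.I
        * ((l : ℂ) * ((φ x).val : ℂ) / ((d ^ 2 : ℕ) : ℂ)))‖ ^ 2) = fun _ => (1 : ℝ) := by
      funext x
      rw [hnorm x]
      norm_num
    rw [this]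
    exact integrable_const 1
  · intro hz
    haveI : (MeasureTheory.ae P).NeBot := ae_neBot.mpr (IsProbabilityMeasure.ne_zero (μ := P))
    obtain ⟨x, hx⟩ := hz.exists
    have h1 := hnorm x
    rw [Pi.zero_apply] at hx
    have hx' : Complex.exp (2 * Real.pi * Complex.I
        * ((l : ℂ) * ((φ x).val : ℂ) / ((d ^ 2 : ℕ) : ℂ))) = 0 := hx
    rw [hx'] at h1
    simp at h1
  · refine Filter.Eventually.of_forall fun x => ?_
    have huu : (fun _ => 1 : SqFreeGroup) = uu := rfl
    show Complex.exp (2 * Real.pi * Complex.I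
        * ((l : ℂ) * ((φ (x + fun _ => 1)).val : ℂ) / ((d ^ 2 : ℕ) : ℂ))) = _
    have hφx : φ (x + fun _ => 1) = φ x + 1 := by
      rw [huu, hφadd, hφu]
    rw [hφx]
    have hmC : ((d ^ 2 : ℕ) : ℂ) = (d : ℂ) ^ 2 := by push_cast; ring
    rw [char_step hd2 l (φ x), hmC]

end Backward

end

end KoopmanAux

open KoopmanAux

/-- Let `ℙ` be the Haar probability measure on `𝔾` (equivalently, by uniqueness of
Haar measure on this compact group: a translation-invariant probability measure).
A complex number `λ` is an eigenvalue of the Koopman operator of the translation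
`g ↦ g + u`, `u = (1,1,1,…)`, on `L²(𝔾, ℙ)` if and only if `λ = e(l/d²)` for some
square-free `d ≥ 1` and `0 ≤ l ≤ d²−1` with `gcd(l, d²)` square-free. -/
theorem koopman_eigenvalue_iff
    (P : Measure SqFreeGroup) (hprob : IsProbabilityMeasure P)
    (hinv : ∀ h : SqFreeGroup, MeasurePreserving (fun g => g + h) P P)
    (lam : ℂ) :
    (∃ f : SqFreeGroup → ℂ, Measurable f ∧
        Integrable (fun g => ‖f g‖ ^ 2) P ∧
        ¬ (f =ᵐ[P] 0) ∧
        ∀ᵐ g ∂P, f (g + fun _ => 1) = lam * f g) ↔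
    (∃ d l : ℕ, Squarefree d ∧ l < d ^ 2 ∧ Squarefree (Nat.gcd l (d ^ 2)) ∧
        lam = Complex.exp (2 * Real.pi * Complex.I * ((l : ℂ) / (d : ℂ) ^ 2))) := by
  haveI := hprob
  constructor
  · rintro ⟨f, hmeas, hf2, hne, heig⟩
    have hfint : Integrable f P := by
      refine Integrable.mono' ((integrable_const (1 : ℝ)).add hf2) hmeas.aestronglyMeasurable ?_
      refine Filter.Eventually.of_forall fun x => ?_
      have h1 : (0 : ℝ) ≤ ‖f x‖ := norm_nonneg _
      have h2 : ‖f x‖ ≤ 1 + ‖f x‖ ^ 2 := by nlinarith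
      simpa using h2
    obtain ⟨n, hn⟩ := exists_condexp_ne P hmeas hfint hne
    set g := P[f|filt n] with hg
    have hTae : (fun x => g (x + uu)) =ᵐ[P] fun x => lam * g x := by
      have h1 := condexp_comp_add P hinv hfint n uu
      have h2 : (fun x => f (x + uu)) =ᵐ[P] fun x => lam * f x := heig
      have h3 := condExp_congr_ae (m := filt n) (μ := P) h2
      have h6 : P[(fun x => lam * f x)|filt n] =ᵐ[P] fun x => lam * g x := by
        have h5 : (fun x => lam * f x) = lam • f := rfl
        rw [h5]
        refine (condExp_smul (μ := P) (m := filt n) lam f).trans ?_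
        exact Filter.Eventually.of_forall fun x => by simp [hg]
      exact h1.trans (h3.trans h6)
    have hIter : ∀ k : ℕ, (fun x => g (x + k • uu)) =ᵐ[P] fun x => lam ^ k * g x := by
      intro k
      induction k with
      | zero => exact Filter.Eventually.of_forall fun x => by simp
      | succ k ih =>
        have hpull := (hinv uu).quasiMeasurePreserving.ae_eq_comp ih
        filter_upwards [hpull, hTae] with x h1 h2
        have hx : x + (k + 1) • uu = (x + uu) + k • uu := by
          rw [succ_nsmul]; abel
        rw [hx]
        have h1' : g ((x + uu) + k • uu) = lam ^ k * g (x + uu) := h1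
        have h2' : g (x + uu) = lam * g x := h2
        rw [h1', h2']
        ring
    set dd := ∏ i ∈ Finset.range n, ((pe i : ℕ)) with hdd
    have hddsf : Squarefree dd := by
      have hinj : ∀ i ∈ Finset.range n, ∀ j ∈ Finset.range n,
          ((pe i : ℕ)) = ((pe j : ℕ)) → i = j := fun i _ j _ hij =>
        pe.injective (Subtype.ext hij)
      have hsf2 : (∏ p ∈ (Finset.range n).image (fun i => ((pe i : ℕ))), p)
          = ∏ i ∈ Finset.range n, ((pe i : ℕ)) := Finset.prod_image hinj
      rw [hdd, ← hsf2]
      refine squarefree_prod_primes fun p hp => ?_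
      obtain ⟨i, _, rfl⟩ := Finset.mem_image.mp hp
      exact (pe i).2
    have hginv : ∀ x, g (x + (dd ^ 2) • uu) = g x := by
      intro x
      refine filt_invariant stronglyMeasurable_condExp fun i hi => ?_
      have hcoord : ((dd ^ 2) • uu) (pe i) = 0 := by
        show (dd ^ 2) • (1 : ZMod ((pe i : ℕ) ^ 2)) = 0
        rw [nsmul_eq_mul, mul_one, ZMod.natCast_eq_zero_iff]
        exact pow_dvd_pow_of_dvd (Finset.dvd_prod_of_mem _ hi) 2
      show x (pe i) + ((dd ^ 2) • uu) (pe i) = x (pe i)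
      rw [hcoord, add_zero]
    have hae2 : ∀ᵐ x ∂P, g x = lam ^ (dd ^ 2) * g x := by
      filter_upwards [hIter (dd ^ 2)] with x h1
      calc g x = g (x + (dd ^ 2) • uu) := (hginv x).symm
        _ = lam ^ (dd ^ 2) * g x := h1
    have hlam : lam ^ (dd ^ 2) = 1 := by
      by_contra hne1
      apply hn
      filter_upwards [hae2] with x hx
      have h0 : (1 - lam ^ (dd ^ 2)) * g x = 0 := by
        rw [sub_mul, one_mul, ← hx, sub_self]
      rcases mul_eq_zero.mp h0 with h | h
      · exact absurd (sub_eq_zero.mp h).symm hne1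
      · simpa using h
    exact exists_rep lam dd hddsf hlam
  · rintro ⟨d, l, hd, hl, hgcd, hlam⟩
    rw [hlam]
    exact backward_eigen P d l hd
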